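/- (Equivalence of the conformal-factor equation with the scalar field equation.) Let ħ > 0, q, m real with m > 0, a₀ > 0 a constant, ε ∈ {−1, 0, 1}. Let g₀ be a smooth field of symmetric invertible real 4×4 matrices on ℝ⁴, Ω a smooth function with Ω² > 0 everywhere, g := Ω² g₀ and g_E := (a/a₀) g₀, and set α := m (Ω² a₀/a)^{1/2}. Then Ω satisfies −(ħ²/2) □_g ln|Ω²/a| + (ħ²/4) g^{μν} ∂_μ ln|Ω²/a| ∂_ν ln|Ω²/a| − Ω⁻² [ ε m² + q²/(β² a²) ] = −m² on ℝ⁴ if and only if α satisfies ħ² □_{g_E} α + (a₀/a) [ ε m² + q²/(β² a²) ] α − α³ = 0 on ℝ⁴. -/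

import Mathlib

open scoped BigOperators

/-- Partial derivative in the μ-th coordinate direction. -/
noncomputable def pd {ι : Type*} [Fintype ι] [DecidableEq ι] {F : Type*}
    [NormedAddCommGroup F] [NormedSpace ℝ F]
    (f : (ι → ℝ) → F) (μ : ι) (x : ι → ℝ) : F :=
  fderiv ℝ f x (Pi.single μ 1)

/-- Coordinate d'Alembertian: □_h f = |det h|^{−1/2} ∂_μ( |det h|^{1/2} h^{μν} ∂_ν f ). -/
noncomputable def box {ι : Type*} [Fintype ι] [DecidableEq ι] {F : Type*}
    [NormedAddCommGroup F] [NormedSpace ℝ F]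
    (h : (ι → ℝ) → Matrix ι ι ℝ) (f : (ι → ℝ) → F) (x : ι → ℝ) : F :=
  (Real.sqrt |(h x).det|)⁻¹ •
    ∑ μ : ι, pd (fun z => ∑ ν : ι, (Real.sqrt |(h z).det| * (h z)⁻¹ μ ν) • pd f ν z) μ x

/-- The function ln|Ω²/a|. -/
noncomputable def lnOa (Ω a : (Fin 4 → ℝ) → ℝ) (z : Fin 4 → ℝ) : ℝ :=
  Real.log |(Ω z)^2 / a z|

section AuxCFE

variable {x : Fin 4 → ℝ}

lemma pd_mul' {f g : (Fin 4 → ℝ) → ℝ} (hf : DifferentiableAt ℝ f x)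
    (hg : DifferentiableAt ℝ g x) (μ : Fin 4) :
    pd (fun z => f z * g z) μ x = pd f μ x * g x + f x * pd g μ x := by
  simp only [pd, fderiv_fun_mul hf hg]
  simp [smul_eq_mul]
  ring

lemma pd_const_mul' {f : (Fin 4 → ℝ) → ℝ} (hf : DifferentiableAt ℝ f x) (c : ℝ) (μ : Fin 4) :
    pd (fun z => c * f z) μ x = c * pd f μ x := by
  simp only [pd, fderiv_const_mul hf c]
  simp

lemma hasFDerivAt_pd' {f : (Fin 4 → ℝ) → ℝ} {f' : (Fin 4 → ℝ) →L[ℝ] ℝ}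
    (h : HasFDerivAt f f' x) (μ : Fin 4) : pd f μ x = f' (Pi.single μ 1) := by
  rw [pd, h.fderiv]

lemma diffAt_det' {M : (Fin 4 → ℝ) → Matrix (Fin 4) (Fin 4) ℝ}
    (h : ∀ i j, DifferentiableAt ℝ (fun z => M z i j) x) :
    DifferentiableAt ℝ (fun z => (M z).det) x := by
  have e : (fun z => (M z).det)
      = fun z => ∑ σ : Equiv.Perm (Fin 4), ((Equiv.Perm.sign σ : ℤ) : ℝ) * ∏ i : Fin 4, M z (σ i) i := by
    funext z; rw [Matrix.det_apply']
  rw [e]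
  refine DifferentiableAt.fun_sum (fun σ _ => DifferentiableAt.const_mul ?_ _)
  exact (HasFDerivAt.finset_prod (fun i _ => (h (σ i) i).hasFDerivAt)).differentiableAt

lemma diffAt_inv_entry' {M : (Fin 4 → ℝ) → Matrix (Fin 4) (Fin 4) ℝ}
    (h : ∀ i j, DifferentiableAt ℝ (fun z => M z i j) x)
    (hdet : (M x).det ≠ 0) (μ ν : Fin 4) :
    DifferentiableAt ℝ (fun z => (M z)⁻¹ μ ν) x := by
  have e : (fun z => (M z)⁻¹ μ ν)
      = fun z => ((M z).det)⁻¹ * ((M z).updateRow ν (Pi.single μ 1)).det := by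
    funext z
    rw [Matrix.inv_def, Matrix.smul_apply, Matrix.adjugate_apply, Ring.inverse_eq_inv',
      smul_eq_mul]
  rw [e]
  refine ((diffAt_det' h).inv hdet).mul (diffAt_det' fun i j => ?_)
  by_cases hiν : i = ν
  · subst hiν; simp only [Matrix.updateRow_apply, if_pos rfl]
    exact differentiableAt_const _
  · simp only [Matrix.updateRow_apply, if_neg hiν]
    exact h i j

lemma sqrtdet_smul' (c : ℝ) (hc : 0 < c) (M : Matrix (Fin 4) (Fin 4) ℝ) :
    Real.sqrt |(c • M).det| = c^2 * Real.sqrt |M.det| := by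
  rw [Matrix.det_smul, Fintype.card_fin, abs_mul, abs_of_pos (pow_pos hc 4),
    Real.sqrt_mul (by positivity)]
  congr 1
  rw [show c^4 = (c^2)^2 by ring, Real.sqrt_sq (by positivity)]

lemma inv_smul_entry' (c : ℝ) (hc : c ≠ 0) (M : Matrix (Fin 4) (Fin 4) ℝ)
    (hM : IsUnit M.det) (μ ν : Fin 4) :
    (c • M)⁻¹ μ ν = c⁻¹ * M⁻¹ μ ν := by
  have : Invertible c := invertibleOfNonzero hc
  rw [M.inv_smul c hM, invOf_eq_inv, Matrix.smul_apply, smul_eq_mul]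

lemma diffAt_sqrt_abs' {d : (Fin 4 → ℝ) → ℝ}
    (hd : DifferentiableAt ℝ d x) (hne : d x ≠ 0) :
    DifferentiableAt ℝ (fun z => Real.sqrt |d z|) x := by
  rcases hne.lt_or_gt with hlt | hlt
  · have hev : (fun z => Real.sqrt |d z|) =ᶠ[nhds x] fun z => Real.sqrt (-(d z)) := by
      filter_upwards [hd.continuousAt.eventually_lt continuousAt_const hlt] with z hz
      rw [abs_of_neg hz]
    rw [hev.differentiableAt_iff]
    exact ((Real.hasDerivAt_sqrt (by rw [Pi.neg_apply]; linarith)).comp_hasFDerivAt x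
      hd.hasFDerivAt.neg).differentiableAt
  · have hev : (fun z => Real.sqrt |d z|) =ᶠ[nhds x] fun z => Real.sqrt (d z) := by
      filter_upwards [continuousAt_const.eventually_lt hd.continuousAt hlt] with z hz
      rw [abs_of_pos hz]
    rw [hev.differentiableAt_iff]
    exact ((Real.hasDerivAt_sqrt hlt.ne').comp_hasFDerivAt x hd.hasFDerivAt).differentiableAt

variable (g₀ : (Fin 4 → ℝ) → Matrix (Fin 4) (Fin 4) ℝ) (a Ω : (Fin 4 → ℝ) → ℝ) (m a₀ : ℝ)

/-- S = Ω²/a. -/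
noncomputable def Sf (z : Fin 4 → ℝ) : ℝ := (Ω z)^2 / a z

/-- s = √|det g₀|. -/
noncomputable def sf (z : Fin 4 → ℝ) : ℝ := Real.sqrt |(g₀ z).det|

/-- u_ν = ∂_ν S / S. -/
noncomputable def uf (ν : Fin 4) (z : Fin 4 → ℝ) : ℝ := pd (Sf a Ω) ν z / Sf a Ω z

/-- w_μ = s ∑_ν g₀⁻¹ μν u_ν. -/
noncomputable def wf (μ : Fin 4) (z : Fin 4 → ℝ) : ℝ :=
  sf g₀ z * ∑ ν : Fin 4, (g₀ z)⁻¹ μ ν * uf a Ω ν z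

/-- α = m √(Ω² a₀ / a). -/
noncomputable def af (z : Fin 4 → ℝ) : ℝ := m * Real.sqrt ((Ω z)^2 * a₀ / a z)

variable (hapos : ∀ x, 0 < a x) (hΩpos : ∀ x, 0 < (Ω x)^2)

section Basic
include hapos hΩpos

lemma Sf_pos : ∀ z, 0 < Sf a Ω z := fun z => div_pos (hΩpos z) (hapos z)

variable (ha : ContDiff ℝ (⊤ : ℕ∞) a) (hΩ : ContDiff ℝ (⊤ : ℕ∞) Ω)
include ha hΩ

lemma Sf_cd : ContDiff ℝ (⊤ : ℕ∞) (Sf a Ω) :=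
  (hΩ.pow 2).div ha (fun z => (hapos z).ne')

lemma Sf_diff : Differentiable ℝ (Sf a Ω) := (Sf_cd a Ω hapos hΩpos ha hΩ).differentiable (by simp)

lemma pdSf_diff (ν : Fin 4) : Differentiable ℝ (fun z => pd (Sf a Ω) ν z) := by
  have h : ContDiff ℝ (⊤ : ℕ∞) (fun z => fderiv ℝ (Sf a Ω) z (Pi.single ν 1)) :=
    ((Sf_cd a Ω hapos hΩpos ha hΩ).fderiv_right (by simp)).clm_apply contDiff_const
  exact h.differentiable (by simp)

lemma uf_diff (ν : Fin 4) : Differentiable ℝ (uf a Ω ν) := by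
  have h : uf a Ω ν = fun z => pd (Sf a Ω) ν z * (Sf a Ω z)⁻¹ := by
    funext z; rw [uf, div_eq_mul_inv]
  rw [h]
  exact fun z => ((pdSf_diff a Ω hapos hΩpos ha hΩ ν) z).mul
    (((Sf_diff a Ω hapos hΩpos ha hΩ) z).inv (Sf_pos a Ω hapos hΩpos z).ne')

lemma lnOa_pd (ν : Fin 4) (z : Fin 4 → ℝ) : pd (lnOa Ω a) ν z = uf a Ω ν z := by
  have h2 : lnOa Ω a = fun w => Real.log (Sf a Ω w) := by
    funext w
    rw [lnOa, show (Ω w)^2 / a w = Sf a Ω w from rfl, abs_of_pos (Sf_pos a Ω hapos hΩpos w)]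
  have h1 : HasFDerivAt (fun w => Real.log (Sf a Ω w))
      ((Sf a Ω z)⁻¹ • fderiv ℝ (Sf a Ω) z) z :=
    (Real.hasDerivAt_log (Sf_pos a Ω hapos hΩpos z).ne').comp_hasFDerivAt z
      (Sf_diff a Ω hapos hΩpos ha hΩ z).hasFDerivAt
  rw [h2, hasFDerivAt_pd' h1]
  simp only [ContinuousLinearMap.coe_smul', Pi.smul_apply, smul_eq_mul]
  rw [uf, pd]
  ring

lemma af_eq (hm : 0 < m) (ha₀ : 0 < a₀) (z : Fin 4 → ℝ) :
    af a Ω m a₀ z = m * Real.sqrt (a₀ * Sf a Ω z) := by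
  rw [af, Sf]
  congr 2
  ring

lemma af_pos (hm : 0 < m) (ha₀ : 0 < a₀) (z : Fin 4 → ℝ) : 0 < af a Ω m a₀ z := by
  rw [af_eq a Ω m a₀ hapos hΩpos ha hΩ hm ha₀ z]
  have : 0 < a₀ * Sf a Ω z := mul_pos ha₀ (Sf_pos a Ω hapos hΩpos z)
  positivity

lemma af_sq (hm : 0 < m) (ha₀ : 0 < a₀) (z : Fin 4 → ℝ) :
    (af a Ω m a₀ z)^2 = m^2 * (a₀ * Sf a Ω z) := by
  rw [af_eq a Ω m a₀ hapos hΩpos ha hΩ hm ha₀ z, mul_pow,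
    Real.sq_sqrt (le_of_lt (mul_pos ha₀ (Sf_pos a Ω hapos hΩpos z)))]

lemma af_hasFDerivAt (hm : 0 < m) (ha₀ : 0 < a₀) (z : Fin 4 → ℝ) :
    HasFDerivAt (af a Ω m a₀)
      (m • ((1 / (2 * Real.sqrt (a₀ * Sf a Ω z))) • (a₀ • fderiv ℝ (Sf a Ω) z))) z := by
  have heq : af a Ω m a₀ = fun w => m * Real.sqrt (a₀ * Sf a Ω w) :=
    funext (af_eq a Ω m a₀ hapos hΩpos ha hΩ hm ha₀)
  rw [heq]
  have hin : HasFDerivAt (fun w => a₀ * Sf a Ω w) (a₀ • fderiv ℝ (Sf a Ω) z) z :=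
    ((Sf_diff a Ω hapos hΩpos ha hΩ z).hasFDerivAt).const_mul a₀
  have hpos : (0:ℝ) < a₀ * Sf a Ω z := mul_pos ha₀ (Sf_pos a Ω hapos hΩpos z)
  exact ((Real.hasDerivAt_sqrt hpos.ne').comp_hasFDerivAt z hin).const_mul m

lemma af_diff (hm : 0 < m) (ha₀ : 0 < a₀) : Differentiable ℝ (af a Ω m a₀) :=
  fun z => (af_hasFDerivAt a Ω m a₀ hapos hΩpos ha hΩ hm ha₀ z).differentiableAt

lemma af_pd (hm : 0 < m) (ha₀ : 0 < a₀) (ν : Fin 4) (z : Fin 4 → ℝ) :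
    pd (af a Ω m a₀) ν z = af a Ω m a₀ z / 2 * uf a Ω ν z := by
  rw [hasFDerivAt_pd' (af_hasFDerivAt a Ω m a₀ hapos hΩpos ha hΩ hm ha₀ z)]
  simp only [ContinuousLinearMap.coe_smul', Pi.smul_apply, smul_eq_mul]
  rw [af_eq a Ω m a₀ hapos hΩpos ha hΩ hm ha₀ z, uf]
  have hpos : (0:ℝ) < a₀ * Sf a Ω z := mul_pos ha₀ (Sf_pos a Ω hapos hΩpos z)
  have hr : Real.sqrt (a₀ * Sf a Ω z) ^ 2 = a₀ * Sf a Ω z := Real.sq_sqrt hpos.le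
  have hrpos : 0 < Real.sqrt (a₀ * Sf a Ω z) := Real.sqrt_pos.mpr hpos
  have hSpos := Sf_pos a Ω hapos hΩpos z
  rw [show (pd (Sf a Ω) ν z) = fderiv ℝ (Sf a Ω) z (Pi.single ν 1) from rfl]
  set r := Real.sqrt (a₀ * Sf a Ω z) with hrdef
  set D := fderiv ℝ (Sf a Ω) z (Pi.single ν 1) with hDdef
  set S := Sf a Ω z with hSdef
  field_simp
  linear_combination (-D) * hr

end Basic

section Metric

variable (hg : ∀ μ ν, ContDiff ℝ (⊤ : ℕ∞) (fun x => g₀ x μ ν))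
variable (hginv : ∀ x, IsUnit (g₀ x).det)

include hginv in
lemma sf_pos : ∀ z, 0 < sf g₀ z := fun z =>
  Real.sqrt_pos.mpr (abs_pos.mpr (hginv z).ne_zero)

include hg hginv hapos hΩpos in
lemma wf_diffAt (ha : ContDiff ℝ (⊤ : ℕ∞) a) (hΩ : ContDiff ℝ (⊤ : ℕ∞) Ω)
    (μ : Fin 4) (z : Fin 4 → ℝ) : DifferentiableAt ℝ (wf g₀ a Ω μ) z := by
  have hent : ∀ i j, DifferentiableAt ℝ (fun w => g₀ w i j) z :=
    fun i j => ((hg i j).differentiable (by simp)) z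
  have hdetne : ((fun w => (g₀ w).det) z) ≠ 0 := (hginv z).ne_zero
  have hsf : DifferentiableAt ℝ (sf g₀) z := diffAt_sqrt_abs' (diffAt_det' hent) hdetne
  have hsum : DifferentiableAt ℝ (fun w => ∑ ν : Fin 4, (g₀ w)⁻¹ μ ν * uf a Ω ν w) z :=
    DifferentiableAt.fun_sum (fun ν _ =>
      (diffAt_inv_entry' hent hdetne μ ν).mul (uf_diff a Ω hapos hΩpos ha hΩ ν z))
  exact hsf.mul hsum

include hginv hapos hΩpos in
lemma box_smul_eq (c k f : (Fin 4 → ℝ) → ℝ) (hc : ∀ z, 0 < c z)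
    (hf : ∀ ν z, pd f ν z = k z * uf a Ω ν z) (x : Fin 4 → ℝ) :
    box (fun z => c z • g₀ z) f x
      = ((c x)^2 * sf g₀ x)⁻¹ *
        ∑ μ : Fin 4, pd (fun z => (c z * k z) * wf g₀ a Ω μ z) μ x := by
  rw [box, smul_eq_mul]
  congr 1
  · rw [sqrtdet_smul' (c x) (hc x) (g₀ x)]
    rfl
  · refine Finset.sum_congr rfl fun μ _ => ?_
    congr 1
    funext z
    simp only [smul_eq_mul]
    calc ∑ ν : Fin 4, Real.sqrt |((fun z => c z • g₀ z) z).det|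
          * ((fun z => c z • g₀ z) z)⁻¹ μ ν * pd f ν z
        = ∑ ν : Fin 4, (c z * k z) * (sf g₀ z * ((g₀ z)⁻¹ μ ν * uf a Ω ν z)) := by
          refine Finset.sum_congr rfl fun ν _ => ?_
          rw [sqrtdet_smul' (c z) (hc z) (g₀ z),
            inv_smul_entry' (c z) (hc z).ne' (g₀ z) (hginv z) μ ν, hf ν z, sf]
          have hcne : c z ≠ 0 := (hc z).ne'
          generalize (g₀ z)⁻¹ μ ν = G
          field_simp
      _ = (c z * k z) * wf g₀ a Ω μ z := by
          rw [wf, Finset.mul_sum, Finset.mul_sum]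

include hapos hΩpos hginv hg in
lemma key_identity (β : ℝ)
    (ha : ContDiff ℝ (⊤ : ℕ∞) a) (hΩ : ContDiff ℝ (⊤ : ℕ∞) Ω)
    (hβ : β ≠ 0) (hb q ε : ℝ) (hm : 0 < m) (ha₀ : 0 < a₀) (x : Fin 4 → ℝ) :
    (-(hb^2/2) * box (fun z => (Ω z)^2 • g₀ z) (lnOa Ω a) x
        + (hb^2/4) * ∑ μ : Fin 4, ∑ ν : Fin 4, ((fun z => (Ω z)^2 • g₀ z) x)⁻¹ μ ν
            * pd (lnOa Ω a) μ x * pd (lnOa Ω a) ν x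
        - ((Ω x)^2)⁻¹ * (ε * m^2 + q^2 / (β^2 * (a x)^2))) + m^2
    = -((m * Real.sqrt ((Ω x)^2 * a₀ / a x)) * a₀ * ((Ω x)^2 / a x))⁻¹ *
      (hb^2 * box (fun z => (a z / a₀) • g₀ z) (fun z => m * Real.sqrt ((Ω z)^2 * a₀ / a z)) x
        + (a₀ / a x) * (ε * m^2 + q^2 / (β^2 * (a x)^2))
            * (m * Real.sqrt ((Ω x)^2 * a₀ / a x))
        - (m * Real.sqrt ((Ω x)^2 * a₀ / a x))^3) := by
  have hSpos := Sf_pos a Ω hapos hΩpos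
  have hspos := sf_pos g₀ hginv
  have hαpos := af_pos a Ω m a₀ hapos hΩpos ha hΩ hm ha₀
  have hαsq := af_sq a Ω m a₀ hapos hΩpos ha hΩ hm ha₀
  have hwd := wf_diffAt g₀ a Ω hapos hΩpos hg hginv ha hΩ
  have hSd := Sf_diff a Ω hapos hΩpos ha hΩ
  have had : Differentiable ℝ a := ha.differentiable (by simp)
  have hαd := af_diff a Ω m a₀ hapos hΩpos ha hΩ hm ha₀
  have hane : ∀ z, a z ≠ 0 := fun z => (hapos z).ne'
  have hΩS : ∀ z, (Ω z)^2 = Sf a Ω z * a z := fun z => (div_mul_cancel₀ _ (hane z)).symm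
  have hpdS : ∀ μ z, pd (Sf a Ω) μ z = uf a Ω μ z * Sf a Ω z := by
    intro μ z
    rw [uf, div_mul_cancel₀ _ (hSpos z).ne']
  have hafdef : (fun z => m * Real.sqrt ((Ω z)^2 * a₀ / a z)) = af a Ω m a₀ := rfl
  rw [hafdef, show m * Real.sqrt ((Ω x)^2 * a₀ / a x) = af a Ω m a₀ x from rfl]
  -- box 1
  have hf1 : ∀ ν z, pd (lnOa Ω a) ν z = (fun _ => (1:ℝ)) z * uf a Ω ν z := by
    intro ν z
    rw [lnOa_pd a Ω hapos hΩpos ha hΩ ν z]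
    ring
  have hb1 := box_smul_eq g₀ a Ω hapos hΩpos hginv
    (fun z => (Ω z)^2) (fun _ => (1:ℝ)) (lnOa Ω a) hΩpos hf1 x
  have hf2 : ∀ ν z, pd (af a Ω m a₀) ν z = (fun z => af a Ω m a₀ z / 2) z * uf a Ω ν z :=
    fun ν z => af_pd a Ω m a₀ hapos hΩpos ha hΩ hm ha₀ ν z
  have hb2 := box_smul_eq g₀ a Ω hapos hΩpos hginv
    (fun z => a z / a₀) (fun z => af a Ω m a₀ z / 2) (af a Ω m a₀)
    (fun z => div_pos (hapos z) ha₀) hf2 x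
  -- sums
  have hsum1 : ∑ μ : Fin 4, pd (fun z => ((fun z => (Ω z)^2) z * (fun _ => (1:ℝ)) z)
        * wf g₀ a Ω μ z) μ x
      = (Sf a Ω x * a x) * (∑ μ : Fin 4, uf a Ω μ x * wf g₀ a Ω μ x)
        + Sf a Ω x * (∑ μ : Fin 4, pd a μ x * wf g₀ a Ω μ x)
        + (Sf a Ω x * a x) * (∑ μ : Fin 4, pd (wf g₀ a Ω μ) μ x) := by
    have hstep : ∀ μ : Fin 4, pd (fun z => ((fun z => (Ω z)^2) z * (fun _ => (1:ℝ)) z)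
          * wf g₀ a Ω μ z) μ x
        = (Sf a Ω x * a x) * (uf a Ω μ x * wf g₀ a Ω μ x)
          + Sf a Ω x * (pd a μ x * wf g₀ a Ω μ x)
          + (Sf a Ω x * a x) * pd (wf g₀ a Ω μ) μ x := by
      intro μ
      have he : (fun z => ((fun z => (Ω z)^2) z * (fun _ => (1:ℝ)) z) * wf g₀ a Ω μ z)
          = (fun z => (Sf a Ω z * a z) * wf g₀ a Ω μ z) := by
        funext z
        simp only [hΩS z, mul_one]
      rw [he, pd_mul' ((hSd x).fun_mul (had x)) (hwd μ x) μ, pd_mul' (hSd x) (had x) μ, hpdS μ x]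
      ring
    rw [Finset.sum_congr rfl (fun μ _ => hstep μ)]
    rw [Finset.sum_add_distrib, Finset.sum_add_distrib, ← Finset.mul_sum, ← Finset.mul_sum,
      ← Finset.mul_sum]
  have hsum2 : ∑ μ : Fin 4, pd (fun z => ((fun z => a z / a₀) z * (fun z => af a Ω m a₀ z / 2) z)
        * wf g₀ a Ω μ z) μ x
      = (a x * af a Ω m a₀ x / (4*a₀)) * (∑ μ : Fin 4, uf a Ω μ x * wf g₀ a Ω μ x)
        + (af a Ω m a₀ x / (2*a₀)) * (∑ μ : Fin 4, pd a μ x * wf g₀ a Ω μ x)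
        + (a x * af a Ω m a₀ x / (2*a₀)) * (∑ μ : Fin 4, pd (wf g₀ a Ω μ) μ x) := by
    have hstep : ∀ μ : Fin 4, pd (fun z => ((fun z => a z / a₀) z * (fun z => af a Ω m a₀ z / 2) z)
          * wf g₀ a Ω μ z) μ x
        = (a x * af a Ω m a₀ x / (4*a₀)) * (uf a Ω μ x * wf g₀ a Ω μ x)
          + (af a Ω m a₀ x / (2*a₀)) * (pd a μ x * wf g₀ a Ω μ x)
          + (a x * af a Ω m a₀ x / (2*a₀)) * pd (wf g₀ a Ω μ) μ x := by
      intro μ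
      have he : (fun z => ((fun z => a z / a₀) z * (fun z => af a Ω m a₀ z / 2) z)
            * wf g₀ a Ω μ z)
          = (fun z => ((1/(2*a₀)) * (a z * af a Ω m a₀ z)) * wf g₀ a Ω μ z) := by
        funext z
        ring
      rw [he, pd_mul' (DifferentiableAt.const_mul ((had x).fun_mul (hαd x)) _) (hwd μ x) μ,
        pd_const_mul' ((had x).fun_mul (hαd x)) _ μ, pd_mul' (had x) (hαd x) μ,
        af_pd a Ω m a₀ hapos hΩpos ha hΩ hm ha₀ μ x]
      field_simp
      ring
    rw [Finset.sum_congr rfl (fun μ _ => hstep μ)]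
    rw [Finset.sum_add_distrib, Finset.sum_add_distrib, ← Finset.mul_sum, ← Finset.mul_sum,
      ← Finset.mul_sum]
  -- gradient term
  have hwx : ∀ μ : Fin 4, ∑ ν : Fin 4, (g₀ x)⁻¹ μ ν * uf a Ω ν x
      = wf g₀ a Ω μ x * (sf g₀ x)⁻¹ := by
    intro μ
    rw [wf, mul_comm (sf g₀ x), mul_inv_cancel_right₀ (hspos x).ne']
  have hgrad : ∑ μ : Fin 4, ∑ ν : Fin 4, ((fun z => (Ω z)^2 • g₀ z) x)⁻¹ μ ν
        * pd (lnOa Ω a) μ x * pd (lnOa Ω a) ν x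
      = ((Ω x)^2)⁻¹ * (sf g₀ x)⁻¹ * ∑ μ : Fin 4, uf a Ω μ x * wf g₀ a Ω μ x := by
    calc ∑ μ : Fin 4, ∑ ν : Fin 4, ((fun z => (Ω z)^2 • g₀ z) x)⁻¹ μ ν
          * pd (lnOa Ω a) μ x * pd (lnOa Ω a) ν x
        = ∑ μ : Fin 4, (((Ω x)^2)⁻¹ * uf a Ω μ x)
            * ∑ ν : Fin 4, (g₀ x)⁻¹ μ ν * uf a Ω ν x := by
          refine Finset.sum_congr rfl fun μ _ => ?_
          rw [Finset.mul_sum]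
          refine Finset.sum_congr rfl fun ν _ => ?_
          rw [show ((fun z => (Ω z)^2 • g₀ z) x) = ((Ω x)^2 • g₀ x) from rfl,
            inv_smul_entry' ((Ω x)^2) (hΩpos x).ne' (g₀ x) (hginv x) μ ν,
            lnOa_pd a Ω hapos hΩpos ha hΩ μ x, lnOa_pd a Ω hapos hΩpos ha hΩ ν x]
          ring
      _ = ((Ω x)^2)⁻¹ * (sf g₀ x)⁻¹ * ∑ μ : Fin 4, uf a Ω μ x * wf g₀ a Ω μ x := by
          rw [Finset.mul_sum]
          refine Finset.sum_congr rfl fun μ _ => ?_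
          rw [hwx μ]
          ring
  rw [hb1, hb2, hsum1, hsum2, hgrad]
  rw [show (Ω x)^2 / a x = Sf a Ω x from rfl]
  have hsq : (af a Ω m a₀ x)^2 = m^2 * (a₀ * Sf a Ω x) := hαsq x
  have h3 : (af a Ω m a₀ x)^3 = m^2 * (a₀ * Sf a Ω x) * af a Ω m a₀ x := by
    have : (af a Ω m a₀ x)^3 = (af a Ω m a₀ x)^2 * af a Ω m a₀ x := by ring
    rw [this, hsq]
  rw [h3, hΩS x]
  set P := ∑ μ : Fin 4, uf a Ω μ x * wf g₀ a Ω μ x with hP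
  set Q := ∑ μ : Fin 4, pd a μ x * wf g₀ a Ω μ x with hQ
  set DW := ∑ μ : Fin 4, pd (wf g₀ a Ω μ) μ x with hDW
  set E := ε * m^2 + q^2 / (β^2 * (a x)^2) with hE
  set αx := af a Ω m a₀ x with hαx
  set S := Sf a Ω x with hSx
  set s₀ := sf g₀ x with hs₀
  have h1 : S ≠ 0 := (hSpos x).ne'
  have h2 : s₀ ≠ 0 := (hspos x).ne'
  have h4 : a x ≠ 0 := hane x
  have h5 : αx ≠ 0 := (hαpos x).ne'
  have h6 : a₀ ≠ 0 := ha₀.ne'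
  field_simp
  ring

end Metric

end AuxCFE

/-- equivalence of the conformal-factor equation with the scalar field
equation: with g = Ω²g₀, g_E = (a/a₀)g₀ and α = m(Ω²a₀/a)^{1/2}, the conformal-factor
equation for Ω holds iff α satisfies ħ² □_{g_E} α + (a₀/a)[εm² + q²/(β²a²)] α − α³ = 0. -/
theorem conformal_factor_eq_iff_scalar_field_eq
    (g₀ : (Fin 4 → ℝ) → Matrix (Fin 4) (Fin 4) ℝ)
    (A : (Fin 4 → ℝ) → Fin 4 → ℝ) (a Ω : (Fin 4 → ℝ) → ℝ) (β : ℝ)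
    (hg : ∀ μ ν, ContDiff ℝ (⊤ : ℕ∞) (fun x => g₀ x μ ν))
    (hgsymm : ∀ x, (g₀ x).IsSymm)
    (hginv : ∀ x, IsUnit (g₀ x).det)
    (hA : ∀ μ, ContDiff ℝ (⊤ : ℕ∞) (fun x => A x μ))
    (ha : ContDiff ℝ (⊤ : ℕ∞) a) (hapos : ∀ x, 0 < a x)
    (hΩ : ContDiff ℝ (⊤ : ℕ∞) Ω) (hΩpos : ∀ x, 0 < (Ω x)^2)
    (hβ : β ≠ 0)
    (hb q m a₀ ε : ℝ) (hhb : 0 < hb) (hm : 0 < m) (ha₀ : 0 < a₀)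
    (hε : ε = -1 ∨ ε = 0 ∨ ε = 1) :
    (∀ x : Fin 4 → ℝ,
      -(hb^2/2) * box (fun z => (Ω z)^2 • g₀ z) (lnOa Ω a) x
        + (hb^2/4) * ∑ μ : Fin 4, ∑ ν : Fin 4, ((fun z => (Ω z)^2 • g₀ z) x)⁻¹ μ ν
            * pd (lnOa Ω a) μ x * pd (lnOa Ω a) ν x
        - ((Ω x)^2)⁻¹ * (ε * m^2 + q^2 / (β^2 * (a x)^2)) = -(m^2)) ↔
    (∀ x : Fin 4 → ℝ,
      hb^2 * box (fun z => (a z / a₀) • g₀ z) (fun z => m * Real.sqrt ((Ω z)^2 * a₀ / a z)) x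
        + (a₀ / a x) * (ε * m^2 + q^2 / (β^2 * (a x)^2))
            * (m * Real.sqrt ((Ω x)^2 * a₀ / a x))
        - (m * Real.sqrt ((Ω x)^2 * a₀ / a x))^3 = 0) := by
  have hkey := fun x => key_identity g₀ a Ω m a₀ hapos hΩpos hg hginv β ha hΩ hβ hb q ε hm ha₀ x
  have hcpos : ∀ x : Fin 4 → ℝ,
      0 < m * Real.sqrt ((Ω x)^2 * a₀ / a x) * a₀ * ((Ω x)^2 / a x) := by
    intro x
    have h1 : 0 < (Ω x)^2 * a₀ / a x := div_pos (mul_pos (hΩpos x) ha₀) (hapos x)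
    exact mul_pos (mul_pos (mul_pos hm (Real.sqrt_pos.mpr h1)) ha₀)
      (div_pos (hΩpos x) (hapos x))
  constructor
  · intro H x
    have hk := hkey x
    rw [H x] at hk
    have h2 : -(m * Real.sqrt ((Ω x)^2 * a₀ / a x) * a₀ * ((Ω x)^2 / a x))⁻¹ *
        (hb^2 * box (fun z => (a z / a₀) • g₀ z)
            (fun z => m * Real.sqrt ((Ω z)^2 * a₀ / a z)) x
          + (a₀ / a x) * (ε * m^2 + q^2 / (β^2 * (a x)^2))
              * (m * Real.sqrt ((Ω x)^2 * a₀ / a x))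
          - (m * Real.sqrt ((Ω x)^2 * a₀ / a x))^3) = 0 := by linarith [hk]
    rcases mul_eq_zero.mp h2 with h | h
    · exact absurd h (neg_ne_zero.mpr (inv_ne_zero (hcpos x).ne'))
    · exact h
  · intro H x
    have hk := hkey x
    rw [H x, mul_zero] at hk
    linarith
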